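/- For a linear system ẋ = Ax with observation s = Cx (C : ℝⁿ → ℝ a linear functional), the system is observable — i.e., the map x₀ ↦ (t ↦ C e^{tA} x₀) is injective — if and only if the observability matrix O = [C; CA; CA²; ...; CA^{n−1}] has rank n (equivalently, ⋂_{j=0}^{n−1} ker(C A^j) = {0}). -/

import Mathlib

open Polynomial NormedSpace

attribute [local instance] Matrix.linftyOpNormedAddCommGroup Matrix.linftyOpNormedRing
  Matrix.linftyOpNormedAlgebra

/-- The linear map `M ↦ C (M.mulVec y)` on matrices. -/
private noncomputable def obsCLM {n : ℕ} (C : (Fin n → ℝ) →ₗ[ℝ] ℝ) (y : Fin n → ℝ) :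
    Matrix (Fin n) (Fin n) ℝ →L[ℝ] ℝ :=
  LinearMap.toContinuousLinearMap
    { toFun := fun M => C (M.mulVec y)
      map_add' := fun M N => by simp [Matrix.add_mulVec]
      map_smul' := fun c M => by
        simp [Matrix.smul_mulVec] }

private lemma obsCLM_apply {n : ℕ} (C : (Fin n → ℝ) →ₗ[ℝ] ℝ) (y : Fin n → ℝ)
    (M : Matrix (Fin n) (Fin n) ℝ) : obsCLM C y M = C (M.mulVec y) := rfl

/-- For the linear system `ẋ = Ax` with observation `s = Cx`, the system
is observable — the map `x₀ ↦ (t ↦ C e^{tA} x₀)` is injective — if and only if the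
observability matrix `[C; CA; …; CA^{n−1}]` has rank `n`, equivalently
`⋂_{j<n} ker (C ∘ A^j) = {0}`. -/
theorem stmt_19 {n : ℕ} (A : Matrix (Fin n) (Fin n) ℝ)
    (C : (Fin n → ℝ) →ₗ[ℝ] ℝ) :
    (∀ x₀ x₁ : Fin n → ℝ,
        (∀ t : ℝ, C ((NormedSpace.exp (t • A)).mulVec x₀) =
          C ((NormedSpace.exp (t • A)).mulVec x₁)) → x₀ = x₁) ↔
      (⨅ j : Fin n, LinearMap.ker (C ∘ₗ (A ^ (j : ℕ)).mulVecLin)) = ⊥ := by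
  constructor
  · -- observability implies trivial kernel
    intro hobs
    rcases Nat.eq_zero_or_pos n with hn | hn
    · subst hn
      rw [Submodule.eq_bot_iff]
      intro x _
      funext i
      exact absurd i.2 (by omega)
    rw [Submodule.eq_bot_iff]
    intro x hx
    have hj : ∀ j : Fin n, C ((A ^ (j : ℕ)).mulVec x) = 0 := by
      intro j
      have := (Submodule.mem_iInf _).mp hx j
      simpa using this
    -- all powers kill x, via Cayley–Hamilton
    have hk : ∀ k : ℕ, C ((A ^ k).mulVec x) = 0 := by
      intro k
      have hmono := A.charpoly_monic
      have hdeg : ((X : ℝ[X]) ^ k %ₘ A.charpoly).natDegree < n := by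
        have h1 : A.charpoly ≠ 1 := by
          intro h
          have := A.charpoly_natDegree_eq_dim
          rw [h] at this
          simp [Fintype.card_fin] at this
          omega
        have := Polynomial.natDegree_modByMonic_lt ((X : ℝ[X]) ^ k) hmono h1
        rwa [A.charpoly_natDegree_eq_dim, Fintype.card_fin] at this
      have hpow : A ^ k = ∑ i ∈ Finset.range n,
          (((X : ℝ[X]) ^ k %ₘ A.charpoly).coeff i) • A ^ i := by
        rw [A.pow_eq_aeval_mod_charpoly k, Polynomial.aeval_eq_sum_range' hdeg]
      rw [hpow, ← obsCLM_apply C x, map_sum]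
      simp only [obsCLM_apply]
      refine Finset.sum_eq_zero fun i hi => ?_
      have hi' : i < n := Finset.mem_range.mp hi
      have := hj ⟨i, hi'⟩
      simp only [Matrix.smul_mulVec, map_smul]
      simp only at this
      rw [this, smul_zero]
    -- hence the output is identically zero
    have hout : ∀ t : ℝ, C ((NormedSpace.exp (t • A)).mulVec x) =
        C ((NormedSpace.exp (t • A)).mulVec 0) := by
      intro t
      rw [Matrix.mulVec_zero, map_zero]
      rw [← obsCLM_apply C x]
      rw [NormedSpace.exp_eq_tsum ℝ]; beta_reduce
      rw [ContinuousLinearMap.map_tsum (obsCLM C x) (NormedSpace.expSeries_summable' (𝕂 := ℝ) (t • A))]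
      have heach : (fun k : ℕ => obsCLM C x (((k.factorial : ℝ))⁻¹ • (t • A) ^ k)) =
          fun _ : ℕ => (0 : ℝ) := by
        funext k
        rw [map_smul, obsCLM_apply, _root_.smul_pow, Matrix.smul_mulVec, map_smul, hk k]
        simp
      rw [heach, tsum_zero]
    exact hobs x 0 hout
  · -- trivial kernel implies observability
    intro hker x₀ x₁ ht
    set y := x₀ - x₁ with hy
    have key : ∀ j : ℕ, ∀ t : ℝ,
        C ((NormedSpace.exp (t • A) * A ^ j).mulVec y) = 0 := by
      intro j
      induction j with
      | zero =>
        intro t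
        rw [pow_zero, mul_one, hy, Matrix.mulVec_sub, map_sub, ht t, sub_self]
      | succ j ih =>
        intro t
        have hder : HasDerivAt (fun u : ℝ => obsCLM C y (NormedSpace.exp (u • A) * A ^ j))
            (obsCLM C y ((NormedSpace.exp (t • A) * A) * A ^ j)) t := by
          have h1 : HasDerivAt (fun u : ℝ => NormedSpace.exp (u • A))
              (NormedSpace.exp (t • A) * A) t := hasDerivAt_exp_smul_const A t
          have h2 : HasDerivAt (fun u : ℝ => NormedSpace.exp (u • A) * A ^ j)
              ((NormedSpace.exp (t • A) * A) * A ^ j) t := h1.mul_const _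
          exact ((obsCLM C y).hasFDerivAt.comp_hasDerivAt t h2)
        have hzero : (fun u : ℝ => obsCLM C y (NormedSpace.exp (u • A) * A ^ j)) =
            fun _ : ℝ => (0 : ℝ) := by
          funext u
          exact ih u
        rw [hzero] at hder
        have := hder.unique (hasDerivAt_const t 0)
        rw [obsCLM_apply] at this
        rw [mul_assoc] at this
        rw [← pow_succ'] at this
        exact this.symm ▸ rfl
    have hj : y ∈ ⨅ j : Fin n, LinearMap.ker (C ∘ₗ (A ^ (j : ℕ)).mulVecLin) := by
      rw [Submodule.mem_iInf]
      intro j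
      have := key (j : ℕ) 0
      rw [zero_smul, NormedSpace.exp_zero, one_mul] at this
      simpa using this
    rw [hker] at hj
    have : y = 0 := hj
    exact sub_eq_zero.mp this
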